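/- For the two-qubit state ω(θ) = (1/2)[[sin²θ, 0, 0, (1/√2)sin θ],[0, 1/2, (1/√2)cos θ, 0],[0, (1/√2)cos θ, cos²θ, 0],[(1/√2)sin θ, 0, 0, 1/2]], the negativity equals Neg(ω(θ)) = (1/4)|cos 2θ|. -/

import Mathlib

open Matrix

noncomputable section

def idx (i k : Fin 2) : Fin 4 := ⟨2 * i.1 + k.1, by omega⟩

/-- `ω(θ)`: the Choi state of the single-qubit selfcomplementary channel with `φ = 0`. -/
def omg (θ : ℝ) : Matrix (Fin 2 × Fin 2) (Fin 2 × Fin 2) ℂ :=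
  Matrix.of fun p q =>
    ((1 / 2 : ℂ) •
      !![(Real.sin θ : ℂ) ^ 2, 0, 0, (((Real.sqrt 2)⁻¹ * Real.sin θ : ℝ) : ℂ);
         0, 1 / 2, (((Real.sqrt 2)⁻¹ * Real.cos θ : ℝ) : ℂ), 0;
         0, (((Real.sqrt 2)⁻¹ * Real.cos θ : ℝ) : ℂ), (Real.cos θ : ℂ) ^ 2, 0;
         (((Real.sqrt 2)⁻¹ * Real.sin θ : ℝ) : ℂ), 0, 0, 1 / 2])
      (idx p.1 p.2) (idx q.1 q.2)

/-- Partial transpose on the first factor: `(ω^{T_A})_{(i,k),(j,l)} = ω_{(j,k),(i,l)}`. -/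
def ptA (ω : Matrix (Fin 2 × Fin 2) (Fin 2 × Fin 2) ℂ) :
    Matrix (Fin 2 × Fin 2) (Fin 2 × Fin 2) ℂ :=
  Matrix.of fun p q => ω (q.1, p.2) (p.1, q.2)

/-- Trace norm of a Hermitian matrix: the sum of the absolute values of its eigenvalues
(junk value 0 for non-Hermitian matrices). -/
def traceNorm {n : Type*} [Fintype n] [DecidableEq n] (A : Matrix n n ℂ) : ℝ :=
  if h : A.IsHermitian then ∑ i, |h.eigenvalues i| else 0

/-- Negativity `Neg(ω) = (‖ω^{T_A}‖₁ − 1)/2`. -/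
def negativity (ω : Matrix (Fin 2 × Fin 2) (Fin 2 × Fin 2) ℂ) : ℝ :=
  (traceNorm (ptA ω) - 1) / 2

open Polynomial in
lemma charpoly_conj' {n : Type*} [Fintype n] [DecidableEq n] (U M : Matrix n n ℂ)
    (h1 : U * star U = 1) : (U * M * star U).charpoly = M.charpoly := by
  have hmap1 : (U.map (C : ℂ →+* ℂ[X])) * ((star U).map C) = 1 := by
    rw [← Matrix.map_mul, h1, Matrix.map_one _ (map_zero C) (map_one C)]
  have hmap2 : ((star U).map (C : ℂ →+* ℂ[X])) * (U.map C) = 1 :=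
    mul_eq_one_comm.mp hmap1
  have key : charmatrix (U * M * star U) = (U.map C) * charmatrix M * ((star U).map C) := by
    unfold charmatrix
    rw [Matrix.mul_sub, Matrix.sub_mul]
    congr 1
    · rw [(Matrix.scalar_commute (X : ℂ[X]) (Commute.all X) (U.map C)).eq.symm, mul_assoc,
        hmap1, mul_one]
    · simp [RingHom.mapMatrix_apply, Matrix.map_mul]
  rw [Matrix.charpoly, Matrix.charpoly, key, det_mul, det_mul, mul_comm, ← mul_assoc,
    ← det_mul, hmap2, det_one, one_mul]

open Polynomial in
lemma charpoly_diag' {n : Type*} [Fintype n] [DecidableEq n] (d : n → ℂ) :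
    (Matrix.diagonal d).charpoly = ∏ i, (X - C (d i)) := by
  have : charmatrix (Matrix.diagonal d) = Matrix.diagonal fun i => (X : ℂ[X]) - C (d i) := by
    ext i j
    by_cases h : i = j
    · subst h; simp [charmatrix_apply_eq]
    · simp [charmatrix_apply_ne _ _ _ h, Matrix.diagonal_apply_ne _ h]
  rw [Matrix.charpoly, this, det_diagonal]

open Polynomial in
lemma eig_prod {n : Type*} [Fintype n] [DecidableEq n] {A : Matrix n n ℂ}
    (h : A.IsHermitian) : A.charpoly = ∏ i, (X - C (h.eigenvalues i : ℂ)) := by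
  rw [← charpoly_diag' (fun i => (h.eigenvalues i : ℂ))]
  conv_lhs => rw [h.spectral_theorem]
  exact charpoly_conj' _ _ (Matrix.mem_unitaryGroup_iff.mp (h.eigenvectorUnitary).2)

lemma herm_ptA_omg (θ : ℝ) : (ptA (omg θ)).IsHermitian := by
  ext ⟨i, k⟩ ⟨j, l⟩
  fin_cases i <;> fin_cases k <;> fin_cases j <;> fin_cases l <;>
    simp [ptA, omg, idx, Matrix.conjTranspose_apply, ← Complex.ofReal_sin,
      ← Complex.ofReal_cos, ← Complex.ofReal_pow, Complex.conj_ofReal]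

def myEquiv : (Fin 2 × Fin 2) ≃ Fin 4 where
  toFun p := idx p.1 p.2
  invFun := ![((0:Fin 2),(0:Fin 2)),(0,1),(1,0),(1,1)]
  left_inv := by decide
  right_inv := by decide

def B (θ : ℝ) : Matrix (Fin 4) (Fin 4) ℂ :=
  (1 / 2 : ℂ) •
    !![(Real.sin θ : ℂ) ^ 2, 0, 0, (((Real.sqrt 2)⁻¹ * Real.cos θ : ℝ) : ℂ);
       0, 1 / 2, (((Real.sqrt 2)⁻¹ * Real.sin θ : ℝ) : ℂ), 0;
       0, (((Real.sqrt 2)⁻¹ * Real.sin θ : ℝ) : ℂ), (Real.cos θ : ℂ) ^ 2, 0;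
       (((Real.sqrt 2)⁻¹ * Real.cos θ : ℝ) : ℂ), 0, 0, 1 / 2]

lemma reidx (θ : ℝ) : Matrix.reindex myEquiv myEquiv (ptA (omg θ)) = B θ := by
  ext i j
  fin_cases i <;> fin_cases j <;>
    simp [ptA, omg, idx, B, myEquiv, Matrix.reindex_apply, Equiv.symm]

open Polynomial in
lemma charB (θ : ℝ) : (B θ).charpoly =
    (X - C (1/2 : ℂ)) * (X - C (1/2 : ℂ)) * (X - C ((Real.cos (2*θ) / 4 : ℝ) : ℂ)) *
      (X - C ((-(Real.cos (2*θ)) / 4 : ℝ) : ℂ)) := by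
  rw [Matrix.charpoly]
  simp +decide [Matrix.det_succ_row_zero, Fin.sum_univ_succ, charmatrix_apply, B,
    Matrix.diagonal_apply, Fin.castSucc, Fin.castAdd, Fin.castLE, Matrix.cons_val_two,
    Matrix.tail_cons]
  simp only [show Fin.succAbove (3 : Fin 4) (2 : Fin 3) = 2 from rfl, Matrix.cons_val_two,
    Matrix.tail_cons, Matrix.head_cons]
  apply Polynomial.funext
  intro x
  simp only [eval_mul, eval_add, eval_sub, eval_pow, eval_neg, eval_X, eval_C, eval_one]
  set s := Complex.sin θ with hs
  set c := Complex.cos θ with hc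
  set r := (((Real.sqrt 2 : ℝ) : ℂ))⁻¹ with hrdef
  have hsc : s ^ 2 + c ^ 2 = 1 := Complex.sin_sq_add_cos_sq _
  have hr : r ^ 2 = 1/2 := by
    rw [hrdef, inv_pow, ← Complex.ofReal_pow, Real.sq_sqrt (by norm_num : (0:ℝ) ≤ 2)]
    norm_num
  have hcos : Complex.cos (2 * (θ:ℂ)) = c ^ 2 - s ^ 2 := by
    rw [Complex.cos_two_mul]
    linear_combination hsc
  rw [hcos]
  linear_combination (c^2*x/16 - c^2*x^2/4 - c^4/32 + c^4*x/8
      + s^2*x/16 - s^2*x^2/4 + s^2*c^2/32 - s^4/32 + s^4*x/8 + r^2*s^2*c^2/16) * hr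
    + (3*x^2/16 - x^3/2 + c^2*x^2/16 + s^2*x^2/16) * hsc

open Polynomial in
lemma eigs_multiset (θ : ℝ) :
    Finset.univ.val.map (herm_ptA_omg θ).eigenvalues =
      ({1/2, 1/2, Real.cos (2*θ)/4, -(Real.cos (2*θ))/4} : Multiset ℝ) := by
  have h := herm_ptA_omg θ
  have hcp : (ptA (omg θ)).charpoly = (B θ).charpoly := by
    rw [← reidx θ, Matrix.charpoly_reindex]
  have key : ((Finset.univ.val.map fun i => ((h.eigenvalues i : ℝ) : ℂ)).map
      fun a : ℂ => X - C a).prod =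
      ((({1/2, 1/2, Real.cos (2*θ)/4, -(Real.cos (2*θ))/4} : Multiset ℝ).map
        (fun t : ℝ => (t : ℂ))).map fun a : ℂ => X - C a).prod := by
    rw [Multiset.map_map]
    have h1 : (Finset.univ.val.map fun i => X - C ((h.eigenvalues i : ℝ) : ℂ)).prod =
        ∏ i, (X - C ((h.eigenvalues i : ℝ) : ℂ)) :=
      (Finset.prod_eq_multiset_prod _ _).symm
    rw [show ((fun a : ℂ => X - C a) ∘ fun i => ((h.eigenvalues i : ℝ) : ℂ)) =
        fun i => X - C ((h.eigenvalues i : ℝ) : ℂ) from rfl, h1, ← eig_prod h, hcp, charB]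
    simp only [Multiset.insert_eq_cons, Multiset.map_cons, Multiset.map_singleton,
      Multiset.prod_cons, Multiset.prod_singleton]
    push_cast
    ring
  have hroots := congrArg Polynomial.roots key
  rw [Polynomial.roots_multiset_prod_X_sub_C, Polynomial.roots_multiset_prod_X_sub_C] at hroots
  rw [show (fun i => ((h.eigenvalues i : ℝ) : ℂ)) = Complex.ofReal ∘ h.eigenvalues from rfl,
    show (fun t : ℝ => (t : ℂ)) = Complex.ofReal from rfl, ← Multiset.map_map] at hroots
  exact Multiset.map_injective Complex.ofReal_injective hroots

/-- The negativity of the two-qubit Choi state `ω(θ)` equals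
`(1/4)|cos 2θ|`. -/
theorem negativity_of_choi (θ : ℝ) :
    negativity (omg θ) = (1 / 4) * |Real.cos (2 * θ)| := by
  have h := herm_ptA_omg θ
  have hsum : ∑ i, |h.eigenvalues i| = 1 + |Real.cos (2*θ)| / 2 := by
    rw [Finset.sum_eq_multiset_sum]
    have : (Finset.univ.val.map fun i => |h.eigenvalues i|) =
        (Finset.univ.val.map h.eigenvalues).map (fun t => |t|) := by
      rw [Multiset.map_map]; rfl
    rw [this, eigs_multiset θ]
    simp only [Multiset.insert_eq_cons, Multiset.map_cons, Multiset.map_singleton,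
      Multiset.sum_cons, Multiset.sum_singleton]
    simp [abs_div, abs_neg]
    ring
  rw [negativity, traceNorm, dif_pos h, hsum]
  ring

end
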